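/- If the Markov chain X is reversible, i.e., μ_x P_{x→x'} = μ_{x'} P_{x'→x} for all x, x' ∈ 𝒳, then I(X_1; X_2 | Y_2) = I(X_2; X_1 | Y_1); consequently C_L(X,W) ≤ I(X_1; X_2 | Y_2) and hence C_P(X,W) ≥ 2·C_L(X,W). -/

import Mathlib

open Filter Real

/-- Shannon entropy (base 2) of a finitely supported probability mass function. -/
noncomputable def ent {A : Type} [Fintype A] (q : A → ℝ) : ℝ :=
  - ∑ a, q a * Real.logb 2 (q a)

/-- Joint law of the first `n+1` samples of a Markov chain with initial distribution `μ`
and transition matrix `P`. -/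
noncomputable def chainJoint {X : Type} (μ : X → ℝ) (P : X → X → ℝ) (n : ℕ)
    (x : Fin (n + 1) → X) : ℝ :=
  μ (x 0) * ∏ i : Fin n, P (x i.castSucc) (x i.succ)

/-- Joint law of `(Y_1, …, Y_{n+1})`, where `Y` is the stationary process obtained by
observing the stationary Markov chain `X ~ (μ, P)` through the channel `W`. -/
noncomputable def obsJoint {X Y : Type} [Fintype X] (μ : X → ℝ) (P : X → X → ℝ)
    (W : X → Y → ℝ) (n : ℕ) (y : Fin (n + 1) → Y) : ℝ :=
  ∑ x : Fin (n + 1) → X, chainJoint μ P n x * ∏ i, W (x i) (y i)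

/-- A finite stochastic matrix is irreducible and aperiodic iff it is primitive, i.e., some
power (and hence all larger powers) of it is entrywise positive. -/
def IrreducibleAperiodic {X : Type} [Fintype X] [DecidableEq X] (P : Matrix X X ℝ) : Prop :=
  ∃ N : ℕ, ∀ n ≥ N, ∀ x x' : X, 0 < (P ^ n) x x'

section Defs

variable {X Y : Type} [Fintype X] [Fintype Y]

/-- Marginal distribution `ν` of each `Y_k`: `νᵀ = μᵀ W`. -/
noncomputable def nuDist (μ : X → ℝ) (W : X → Y → ℝ) : Y → ℝ := fun y => ∑ x, μ x * W x y

/-- Joint distribution of `(Y_1, Y_2)`. -/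
noncomputable def jointYY (μ : X → ℝ) (P : X → X → ℝ) (W : X → Y → ℝ) : Y × Y → ℝ :=
  fun p => ∑ x, ∑ x', μ x * W x p.1 * P x x' * W x' p.2

/-- Joint distribution of `(X_1, Y_2)`. -/
noncomputable def jointX1Y2 (μ : X → ℝ) (P : X → X → ℝ) (W : X → Y → ℝ) : X × Y → ℝ :=
  fun p => ∑ x', μ p.1 * P p.1 x' * W x' p.2

/-- Joint distribution of `(X_2, Y_1)`. -/
noncomputable def jointX2Y1 (μ : X → ℝ) (P : X → X → ℝ) (W : X → Y → ℝ) : X × Y → ℝ :=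
  fun p => ∑ x, μ x * W x p.2 * P x p.1

/-- Joint distribution of `(X_1, X_2)`. -/
noncomputable def jointXX (μ : X → ℝ) (P : X → X → ℝ) : X × X → ℝ :=
  fun p => μ p.1 * P p.1 p.2

/-- Joint distribution of `(X_1, Y_1)`. -/
noncomputable def jointX1Y1 (μ : X → ℝ) (W : X → Y → ℝ) : X × Y → ℝ :=
  fun p => μ p.1 * W p.1 p.2

/-- Joint distribution of `(X_2, Y_2)`. -/
noncomputable def jointX2Y2 (μ : X → ℝ) (P : X → X → ℝ) (W : X → Y → ℝ) : X × Y → ℝ :=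
  fun p => ∑ x, μ x * P x p.1 * W p.1 p.2

/-- Joint distribution of `(X_1, X_2, Y_2)`. -/
noncomputable def jointX1X2Y2 (μ : X → ℝ) (P : X → X → ℝ) (W : X → Y → ℝ) :
    X × X × Y → ℝ :=
  fun p => μ p.1 * P p.1 p.2.1 * W p.2.1 p.2.2

/-- Joint distribution of `(X_1, X_2, Y_1)`. -/
noncomputable def jointX1X2Y1 (μ : X → ℝ) (P : X → X → ℝ) (W : X → Y → ℝ) :
    X × X × Y → ℝ :=
  fun p => μ p.1 * W p.1 p.2.2 * P p.1 p.2.1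

/-- Joint distribution of `(X_1, Y_1, Y_2)`. -/
noncomputable def jointX1Y1Y2 (μ : X → ℝ) (P : X → X → ℝ) (W : X → Y → ℝ) :
    X × Y × Y → ℝ :=
  fun p => ∑ x', μ p.1 * W p.1 p.2.1 * P p.1 x' * W x' p.2.2

/-- Conditional entropy `H(Y_2 | Y_1) = H(Y_1, Y_2) − H(Y_1)`. -/
noncomputable def HY2gY1 (μ : X → ℝ) (P : X → X → ℝ) (W : X → Y → ℝ) : ℝ :=
  ent (jointYY μ P W) - ent (nuDist μ W)

/-- Conditional entropy `H(Y_2 | X_1) = H(X_1, Y_2) − H(X_1)`. -/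
noncomputable def HY2gX1 (μ : X → ℝ) (P : X → X → ℝ) (W : X → Y → ℝ) : ℝ :=
  ent (jointX1Y2 μ P W) - ent μ

/-- Conditional entropy `H(Y_1 | X_2) = H(X_2, Y_1) − H(X_2)`. -/
noncomputable def HY1gX2 (μ : X → ℝ) (P : X → X → ℝ) (W : X → Y → ℝ) : ℝ :=
  ent (jointX2Y1 μ P W) - ent μ

/-- Mutual information `I(X_1; X_2) = H(X_1) + H(X_2) − H(X_1, X_2)` (stationary case). -/
noncomputable def IX1X2 (μ : X → ℝ) (P : X → X → ℝ) : ℝ :=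
  2 * ent μ - ent (jointXX μ P)

/-- Mutual information `I(Y_1; Y_2) = H(Y_1) + H(Y_2) − H(Y_1, Y_2)` (stationary case). -/
noncomputable def IY1Y2 (μ : X → ℝ) (P : X → X → ℝ) (W : X → Y → ℝ) : ℝ :=
  2 * ent (nuDist μ W) - ent (jointYY μ P W)

/-- The lumpability cost `C_L(X, W) = H(Y_2|Y_1) − H(Y_2|X_1)`. -/
noncomputable def CL (μ : X → ℝ) (P : X → X → ℝ) (W : X → Y → ℝ) : ℝ :=
  HY2gY1 μ P W - HY2gX1 μ P W

/-- The predictability cost `C_P(X, W) = I(X_1;X_2) − I(Y_1;Y_2)`. -/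
noncomputable def CP (μ : X → ℝ) (P : X → X → ℝ) (W : X → Y → ℝ) : ℝ :=
  IX1X2 μ P - IY1Y2 μ P W

/-- The aggregation cost `C_β(X, W) = (1−2β)·C_L(X,W) + β·C_P(X,W)`. -/
noncomputable def Cbeta (μ : X → ℝ) (P : X → X → ℝ) (W : X → Y → ℝ) (β : ℝ) : ℝ :=
  (1 - 2 * β) * CL μ P W + β * CP μ P W

/-- `δ_β(X,W) = (1−β)·(H(Y_2|Y_1) − H̄(Y)) + β·(I(X_1;X_2) − H(Y_1) + H̄(Y))`, where `hbarY`
denotes the entropy rate `H̄(Y)`. -/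
noncomputable def deltaBeta (μ : X → ℝ) (P : X → X → ℝ) (W : X → Y → ℝ)
    (hbarY β : ℝ) : ℝ :=
  (1 - β) * (HY2gY1 μ P W - hbarY) + β * (IX1X2 μ P - ent (nuDist μ W) + hbarY)

/-- Conditional mutual information
`I(X_1; X_2 | Y_2) = H(X_1,Y_2) + H(X_2,Y_2) − H(X_1,X_2,Y_2) − H(Y_2)`. -/
noncomputable def IX1X2gY2 (μ : X → ℝ) (P : X → X → ℝ) (W : X → Y → ℝ) : ℝ :=
  ent (jointX1Y2 μ P W) + ent (jointX2Y2 μ P W) - ent (jointX1X2Y2 μ P W) -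
    ent (nuDist μ W)

/-- Conditional mutual information
`I(X_2; X_1 | Y_1) = H(X_1,Y_1) + H(X_2,Y_1) − H(X_1,X_2,Y_1) − H(Y_1)`. -/
noncomputable def IX2X1gY1 (μ : X → ℝ) (P : X → X → ℝ) (W : X → Y → ℝ) : ℝ :=
  ent (jointX1Y1 μ W) + ent (jointX2Y1 μ P W) - ent (jointX1X2Y1 μ P W) -
    ent (nuDist μ W)

/-- Conditional mutual information
`I(Y_2; X_1 | Y_1) = H(X_1,Y_1) + H(Y_1,Y_2) − H(X_1,Y_1,Y_2) − H(Y_1)`. -/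
noncomputable def IY2X1gY1 (μ : X → ℝ) (P : X → X → ℝ) (W : X → Y → ℝ) : ℝ :=
  ent (jointX1Y1 μ W) + ent (jointYY μ P W) - ent (jointX1Y1Y2 μ P W) -
    ent (nuDist μ W)

/-- Mutual information `I(X_2; Y_1) = H(X_2) + H(Y_1) − H(X_2, Y_1)`. -/
noncomputable def IX2Y1 (μ : X → ℝ) (P : X → X → ℝ) (W : X → Y → ℝ) : ℝ :=
  ent μ + ent (nuDist μ W) - ent (jointX2Y1 μ P W)

/-- The deterministic channel induced by an aggregation function `g : X → Y`:
`W_{x→y} = 1` iff `y = g x`. -/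
noncomputable def detW [DecidableEq Y] (g : X → Y) : X → Y → ℝ :=
  fun x y => if g x = y then 1 else 0

/-- The row-stochastic matrix `R = P·W` for a deterministic aggregation `g`:
`R_{x→y} = ∑_{x' : g x' = y} P_{x→x'}`. -/
noncomputable def Rmat [DecidableEq Y] (P : X → X → ℝ) (g : X → Y) : X → Y → ℝ :=
  fun x y => ∑ x', if g x' = y then P x x' else 0

/-- Kullback–Leibler divergence (base 2) between two probability mass functions on `Y`. -/
noncomputable def klDiv2 (p q : Y → ℝ) : ℝ :=
  ∑ y, p y * Real.logb 2 (p y / q y)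

end Defs

lemma ent_comp_equiv {A B : Type} [Fintype A] [Fintype B] (e : A ≃ B) (q : B → ℝ) :
    ent (fun a => q (e a)) = ent q := by
  unfold ent
  rw [Fintype.sum_equiv e (fun a => q (e a) * Real.logb 2 (q (e a)))
    (fun b => q b * Real.logb 2 (q b)) (fun a => rfl)]

lemma ent_congr {A : Type} [Fintype A] {q q' : A → ℝ} (h : ∀ a, q a = q' a) :
    ent q = ent q' := by
  unfold ent
  exact congrArg Neg.neg (Finset.sum_congr rfl fun a _ => by rw [h a])

lemma ent_prod_kernel {A B : Type} [Fintype A] [Fintype B] (r : A → ℝ) (K : A → B → ℝ)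
    (hK : ∀ a, ∑ b, K a b = 1) :
    ent (fun p : A × B => r p.1 * K p.1 p.2) = ent r + ∑ a, r a * ent (K a) := by
  unfold ent
  rw [Fintype.sum_prod_type]
  have h1 : ∀ a : A, ∑ b, r a * K a b * Real.logb 2 (r a * K a b)
      = r a * Real.logb 2 (r a) + r a * ∑ b, K a b * Real.logb 2 (K a b) := by
    intro a
    have hpt : ∀ b, r a * K a b * Real.logb 2 (r a * K a b)
        = (r a * Real.logb 2 (r a)) * K a b + r a * (K a b * Real.logb 2 (K a b)) := by
      intro b
      rcases eq_or_ne (r a) 0 with h | h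
      · simp [h]
      rcases eq_or_ne (K a b) 0 with h' | h'
      · simp [h']
      rw [Real.logb_mul h h']; ring
    calc ∑ b, r a * K a b * Real.logb 2 (r a * K a b)
        = ∑ b, ((r a * Real.logb 2 (r a)) * K a b + r a * (K a b * Real.logb 2 (K a b))) :=
          Finset.sum_congr rfl (fun b _ => hpt b)
      _ = (r a * Real.logb 2 (r a)) * (∑ b, K a b)
            + r a * ∑ b, K a b * Real.logb 2 (K a b) := by
          rw [Finset.sum_add_distrib, ← Finset.mul_sum, ← Finset.mul_sum]
      _ = _ := by rw [hK a]; ring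
  rw [Finset.sum_congr rfl (fun a _ => h1 a), Finset.sum_add_distrib]
  simp only [neg_add, mul_neg, Finset.sum_neg_distrib]

noncomputable def entn {A : Type} [Fintype A] (q : A → ℝ) : ℝ :=
  - ∑ a, q a * Real.log (q a)

lemma ent_eq_entn {A : Type} [Fintype A] (q : A → ℝ) :
    ent q = entn q / Real.log 2 := by
  unfold ent entn Real.logb
  rw [neg_div, Finset.sum_div]
  congr 1
  exact Finset.sum_congr rfl fun a _ => (mul_div_assoc _ _ _).symm

private lemma sum_rot {A B C : Type} [Fintype A] [Fintype B] [Fintype C]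
    (f : A → B → C → ℝ) :
    ∑ a, ∑ b, ∑ c, f a b c = ∑ c, ∑ a, ∑ b, f a b c :=
  (Finset.sum_congr rfl fun _ _ => Finset.sum_comm).trans Finset.sum_comm

private lemma sum_triple {A B C : Type} [Fintype A] [Fintype B] [Fintype C]
    (f : A × B × C → ℝ) :
    ∑ z : A × B × C, f z = ∑ a, ∑ b, ∑ c, f (a, b, c) := by
  rw [Fintype.sum_prod_type]
  exact Finset.sum_congr rfl fun a _ => by rw [Fintype.sum_prod_type]

private lemma sum_triple' {A B C : Type} [Fintype A] [Fintype B] [Fintype C]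
    (f : A × B × C → ℝ) :
    ∑ z : A × B × C, f z = ∑ c, ∑ a, ∑ b, f (a, b, c) :=
  (sum_triple f).trans (sum_rot _)

private def eqSwap (X Y : Type) : (X × X × Y) ≃ (X × X × Y) :=
  ⟨fun z => (z.2.1, z.1, z.2.2), fun z => (z.2.1, z.1, z.2.2), fun _ => rfl, fun _ => rfl⟩

private def eqA3 (X Y : Type) : ((X × X) × Y) ≃ (X × X × Y) :=
  ⟨fun q => (q.1.1, q.1.2, q.2), fun z => ((z.1, z.2.1), z.2.2), fun _ => rfl, fun _ => rfl⟩

private def eqA4 (X Y : Type) : ((X × X × Y) × Y) ≃ (X × X × (Y × Y)) :=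
  ⟨fun q => (q.1.1, q.1.2.1, (q.1.2.2, q.2)), fun z => ((z.1, z.2.1, z.2.2.1), z.2.2.2),
    fun _ => rfl, fun _ => rfl⟩

private def eqXY (X Y : Type) : ((X × Y) × Y) ≃ (X × (Y × Y)) :=
  ⟨fun q => (q.1.1, (q.1.2, q.2)), fun z => ((z.1, z.2.1), z.2.2), fun _ => rfl, fun _ => rfl⟩

lemma cmi_nonneg {A B C : Type} [Fintype A] [Fintype B] [Fintype C]
    (p : A × B × C → ℝ) (pAC : A × C → ℝ) (pBC : B × C → ℝ) (pC : C → ℝ)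
    (hp : ∀ z, 0 ≤ p z) (hs : ∑ z, p z = 1)
    (hAC : ∀ a c, pAC (a, c) = ∑ b, p (a, b, c))
    (hBC : ∀ b c, pBC (b, c) = ∑ a, p (a, b, c))
    (hC : ∀ c, pC c = ∑ a, ∑ b, p (a, b, c)) :
    ent p + ent pC ≤ ent pAC + ent pBC := by
  have hAC0 : ∀ a c, 0 ≤ pAC (a, c) := fun a c =>
    (hAC a c) ▸ Finset.sum_nonneg fun b _ => hp _
  have hBC0 : ∀ b c, 0 ≤ pBC (b, c) := fun b c =>
    (hBC b c) ▸ Finset.sum_nonneg fun a _ => hp _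
  have hC0 : ∀ c, 0 ≤ pC c := fun c =>
    (hC c) ▸ Finset.sum_nonneg fun a _ => Finset.sum_nonneg fun b _ => hp _
  have hle1 : ∀ a b c, p (a, b, c) ≤ pAC (a, c) := fun a b c =>
    (hAC a c) ▸ Finset.single_le_sum (f := fun b => p (a,b,c)) (fun b _ => hp _)
      (Finset.mem_univ b)
  have hle2 : ∀ a b c, p (a, b, c) ≤ pBC (b, c) := fun a b c =>
    (hBC b c) ▸ Finset.single_le_sum (f := fun a => p (a,b,c)) (fun a _ => hp _)
      (Finset.mem_univ a)
  have hle3 : ∀ a c, pAC (a, c) ≤ pC c := by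
    intro a c
    rw [hAC a c, hC c]
    exact Finset.single_le_sum (f := fun a => ∑ b, p (a,b,c))
      (fun a _ => Finset.sum_nonneg fun b _ => hp _) (Finset.mem_univ a)
  set D : ℝ := ∑ z : A × B × C,
      p z * Real.log (pAC (z.1, z.2.2) * pBC (z.2.1, z.2.2) / (p z * pC z.2.2)) with hD
  -- Step 1 : D ≤ 0
  have hDle : D ≤ 0 := by
    have hterm : ∀ z : A × B × C,
        p z * Real.log (pAC (z.1, z.2.2) * pBC (z.2.1, z.2.2) / (p z * pC z.2.2))
          ≤ pAC (z.1, z.2.2) * pBC (z.2.1, z.2.2) / pC z.2.2 - p z := by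
      rintro ⟨a, b, c⟩
      rcases eq_or_lt_of_le (hp (a, b, c)) with h | h
      · simp only [← h, zero_mul, sub_zero]
        exact div_nonneg (mul_nonneg (hAC0 a c) (hBC0 b c)) (hC0 c)
      · have hA : 0 < pAC (a, c) := lt_of_lt_of_le h (hle1 a b c)
        have hB : 0 < pBC (b, c) := lt_of_lt_of_le h (hle2 a b c)
        have hCc : 0 < pC c := lt_of_lt_of_le hA (hle3 a c)
        have hrpos : 0 < pAC (a, c) * pBC (b, c) / (p (a, b, c) * pC c) := by positivity
        calc p (a,b,c) * Real.log (pAC (a, c) * pBC (b, c) / (p (a,b,c) * pC c))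
            ≤ p (a,b,c) * (pAC (a, c) * pBC (b, c) / (p (a,b,c) * pC c) - 1) :=
              mul_le_mul_of_nonneg_left (Real.log_le_sub_one_of_pos hrpos) (le_of_lt h)
          _ = pAC (a, c) * pBC (b, c) / pC c - p (a,b,c) := by
              field_simp
    have hsle : (∑ z : A × B × C, pAC (z.1, z.2.2) * pBC (z.2.1, z.2.2) / pC z.2.2) ≤ 1 := by
      have hc : ∀ c : C, (∑ a, ∑ b, pAC (a, c) * pBC (b, c) / pC c) ≤ pC c := by
        intro c
        rcases eq_or_lt_of_le (hC0 c) with h | h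
        · have hz : ∀ a, pAC (a, c) = 0 := by
            intro a
            have h1 := hle3 a c
            have h2 := hAC0 a c
            linarith
          simp [hz, ← h]
        · have heq : (∑ a, ∑ b, pAC (a, c) * pBC (b, c) / pC c)
              = (∑ a, pAC (a, c)) * (∑ b, pBC (b, c)) / pC c := by
            rw [Finset.sum_mul, Finset.sum_div]
            refine Finset.sum_congr rfl fun a _ => ?_
            rw [Finset.mul_sum, Finset.sum_div]
          have hACsum : ∑ a, pAC (a, c) = pC c := by
            rw [hC c]; exact Finset.sum_congr rfl fun a _ => hAC a c
          have hBCsum : ∑ b, pBC (b, c) = pC c := by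
            rw [hC c]
            rw [Finset.sum_congr rfl fun b _ => hBC b c]
            exact Finset.sum_comm
          rw [heq, hACsum, hBCsum, div_le_iff₀ h]
      have hreorder : (∑ z : A × B × C, pAC (z.1, z.2.2) * pBC (z.2.1, z.2.2) / pC z.2.2)
          = ∑ c, ∑ a, ∑ b, pAC (a, c) * pBC (b, c) / pC c :=
        sum_triple' _
      have hCsum : ∑ c, pC c = 1 := by
        rw [← hs, sum_triple]
        rw [Finset.sum_congr rfl fun c _ => hC c]
        exact (sum_rot _).symm
      calc (∑ z : A × B × C, pAC (z.1, z.2.2) * pBC (z.2.1, z.2.2) / pC z.2.2)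
          = ∑ c, ∑ a, ∑ b, pAC (a, c) * pBC (b, c) / pC c := hreorder
        _ ≤ ∑ c, pC c := Finset.sum_le_sum fun c _ => hc c
        _ = 1 := hCsum
    calc D ≤ ∑ z : A × B × C, (pAC (z.1, z.2.2) * pBC (z.2.1, z.2.2) / pC z.2.2 - p z) :=
          Finset.sum_le_sum fun z _ => hterm z
      _ = (∑ z : A × B × C, pAC (z.1, z.2.2) * pBC (z.2.1, z.2.2) / pC z.2.2) - 1 := by
          rw [Finset.sum_sub_distrib, hs]
      _ ≤ 0 := by linarith
  -- Step 2 : express D via entropies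
  have hsplit : D = (∑ z : A × B × C, p z * Real.log (pAC (z.1, z.2.2)))
      + (∑ z : A × B × C, p z * Real.log (pBC (z.2.1, z.2.2)))
      - (∑ z : A × B × C, p z * Real.log (p z))
      - (∑ z : A × B × C, p z * Real.log (pC z.2.2)) := by
    have hpt : ∀ z : A × B × C,
        p z * Real.log (pAC (z.1, z.2.2) * pBC (z.2.1, z.2.2) / (p z * pC z.2.2))
          = p z * Real.log (pAC (z.1, z.2.2)) + p z * Real.log (pBC (z.2.1, z.2.2))
            - p z * Real.log (p z) - p z * Real.log (pC z.2.2) := by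
      rintro ⟨a, b, c⟩
      rcases eq_or_lt_of_le (hp (a, b, c)) with h | h
      · simp [← h]
      · have hA : 0 < pAC (a, c) := lt_of_lt_of_le h (hle1 a b c)
        have hB : 0 < pBC (b, c) := lt_of_lt_of_le h (hle2 a b c)
        have hCc : 0 < pC c := lt_of_lt_of_le hA (hle3 a c)
        rw [Real.log_div (by positivity) (by positivity),
          Real.log_mul (ne_of_gt hA) (ne_of_gt hB),
          Real.log_mul (ne_of_gt h) (ne_of_gt hCc)]
        ring
    rw [hD, Finset.sum_congr rfl fun z _ => hpt z]
    rw [Finset.sum_sub_distrib, Finset.sum_sub_distrib, Finset.sum_add_distrib]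
  have hS1 : (∑ z : A × B × C, p z * Real.log (pAC (z.1, z.2.2))) = - entn pAC := by
    unfold entn
    rw [neg_neg]
    calc ∑ z : A × B × C, p z * Real.log (pAC (z.1, z.2.2))
        = ∑ a, ∑ b, ∑ c, p (a, b, c) * Real.log (pAC (a, c)) := sum_triple _
      _ = ∑ a, ∑ c, ∑ b, p (a, b, c) * Real.log (pAC (a, c)) :=
          Finset.sum_congr rfl fun a _ => Finset.sum_comm
      _ = ∑ a, ∑ c, pAC (a, c) * Real.log (pAC (a, c)) := by
          refine Finset.sum_congr rfl fun a _ => Finset.sum_congr rfl fun c _ => ?_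
          rw [← Finset.sum_mul, ← hAC a c]
      _ = ∑ q : A × C, pAC q * Real.log (pAC q) := by rw [Fintype.sum_prod_type]
  have hS2 : (∑ z : A × B × C, p z * Real.log (pBC (z.2.1, z.2.2))) = - entn pBC := by
    unfold entn
    rw [neg_neg]
    calc ∑ z : A × B × C, p z * Real.log (pBC (z.2.1, z.2.2))
        = ∑ a, ∑ b, ∑ c, p (a, b, c) * Real.log (pBC (b, c)) := sum_triple _
      _ = ∑ b, ∑ a, ∑ c, p (a, b, c) * Real.log (pBC (b, c)) := Finset.sum_comm
      _ = ∑ b, ∑ c, ∑ a, p (a, b, c) * Real.log (pBC (b, c)) :=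
          Finset.sum_congr rfl fun b _ => Finset.sum_comm
      _ = ∑ b, ∑ c, pBC (b, c) * Real.log (pBC (b, c)) := by
          refine Finset.sum_congr rfl fun b _ => Finset.sum_congr rfl fun c _ => ?_
          rw [← Finset.sum_mul, ← hBC b c]
      _ = ∑ q : B × C, pBC q * Real.log (pBC q) := by rw [Fintype.sum_prod_type]
  have hS3 : (∑ z : A × B × C, p z * Real.log (p z)) = - entn p := by
    unfold entn; rw [neg_neg]
  have hS4 : (∑ z : A × B × C, p z * Real.log (pC z.2.2)) = - entn pC := by
    unfold entn
    rw [neg_neg]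
    calc ∑ z : A × B × C, p z * Real.log (pC z.2.2)
        = ∑ c, ∑ a, ∑ b, p (a, b, c) * Real.log (pC c) := sum_triple' _
      _ = ∑ c, pC c * Real.log (pC c) := by
          refine Finset.sum_congr rfl fun c _ => ?_
          rw [hC c, Finset.sum_mul]
          refine Finset.sum_congr rfl fun a _ => ?_
          rw [Finset.sum_mul]
  have key : entn p + entn pC ≤ entn pAC + entn pBC := by
    rw [hS1, hS2, hS3, hS4] at hsplit
    linarith
  rw [ent_eq_entn, ent_eq_entn, ent_eq_entn, ent_eq_entn,
    ← add_div, ← add_div]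
  have hlog2 : (0:ℝ) < Real.log 2 := Real.log_pos one_lt_two
  exact div_le_div_of_nonneg_right key hlog2.le


theorem reversible_condMutInf_symm
    {X Y : Type} [Fintype X] [Fintype Y] [Nonempty X] [Nonempty Y] [DecidableEq X]
    (μ : X → ℝ) (P : X → X → ℝ) (W : X → Y → ℝ)
    (hμ0 : ∀ x, 0 ≤ μ x) (hμ1 : ∑ x, μ x = 1)
    (hP0 : ∀ x x', 0 ≤ P x x') (hP1 : ∀ x, ∑ x', P x x' = 1)
    (hinv : ∀ x', ∑ x, μ x * P x x' = μ x')
    (hirr : IrreducibleAperiodic (Matrix.of fun a b => P a b))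
    (hW0 : ∀ x y, 0 ≤ W x y) (hW1 : ∀ x, ∑ y, W x y = 1)
    (hrev : ∀ x x', μ x * P x x' = μ x' * P x' x) :
    IX1X2gY2 μ P W = IX2X1gY1 μ P W ∧
    CL μ P W ≤ IX1X2gY2 μ P W ∧
    2 * CL μ P W ≤ CP μ P W := by
  classical
  -- the composite channel P·W
  set PW : X → Y → ℝ := fun x y => ∑ x', P x x' * W x' y with hPWdef
  have hPW1 : ∀ x, ∑ y, PW x y = 1 := by
    intro x
    show ∑ y, ∑ x', P x x' * W x' y = 1
    calc ∑ y, ∑ x', P x x' * W x' y = ∑ x', ∑ y, P x x' * W x' y := Finset.sum_comm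
      _ = ∑ x', P x x' * ∑ y, W x' y :=
          Finset.sum_congr rfl fun x' _ => (Finset.mul_sum _ _ _).symm
      _ = ∑ x', P x x' := by
          refine Finset.sum_congr rfl fun x' _ => ?_
          rw [hW1 x', mul_one]
      _ = 1 := hP1 x
  set h2 : ℝ := ∑ x, μ x * ent (W x) with hh2
  set EW : ℝ := ∑ x, μ x * ent (PW x) with hEW
  -- (1) ent (X1,Y2)
  have hX1Y2fun : jointX1Y2 μ P W = fun p : X × Y => μ p.1 * PW p.1 p.2 := by
    funext p
    show ∑ x', μ p.1 * P p.1 x' * W x' p.2 = μ p.1 * ∑ x', P p.1 x' * W x' p.2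
    rw [Finset.mul_sum]
    exact Finset.sum_congr rfl fun x' _ => by ring
  have f1 : ent (jointX1Y2 μ P W) = ent μ + EW := by
    rw [hX1Y2fun]; exact ent_prod_kernel μ PW hPW1
  -- (2) reversibility : jointX1Y2 = jointX2Y1
  have f2 : ent (jointX1Y2 μ P W) = ent (jointX2Y1 μ P W) := by
    refine ent_congr fun p => ?_
    show ∑ x', μ p.1 * P p.1 x' * W x' p.2 = ∑ x', μ x' * W x' p.2 * P x' p.1
    refine Finset.sum_congr rfl fun x' _ => ?_
    rw [hrev p.1 x']; ring
  -- (3) stationarity : jointX2Y2 = jointX1Y1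
  have f3 : ent (jointX2Y2 μ P W) = ent (jointX1Y1 μ W) := by
    refine ent_congr fun p => ?_
    show ∑ x, μ x * P x p.1 * W p.1 p.2 = μ p.1 * W p.1 p.2
    rw [← Finset.sum_mul]
    rw [hinv p.1]
  -- (4) ent (X1,Y1)
  have f4 : ent (jointX1Y1 μ W) = ent μ + h2 := by
    have := ent_prod_kernel μ W hW1
    exact this
  -- (5) swap : ent (X1,X2,Y2) = ent (X1,X2,Y1)
  have f5 : ent (jointX1X2Y2 μ P W) = ent (jointX1X2Y1 μ P W) := by
    have h1 : ent (fun z : X × X × Y => jointX1X2Y1 μ P W (eqSwap X Y z))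
        = ent (jointX1X2Y1 μ P W) := ent_comp_equiv (eqSwap X Y) _
    rw [← h1]
    refine ent_congr fun z => ?_
    show μ z.1 * P z.1 z.2.1 * W z.2.1 z.2.2 = μ z.2.1 * W z.2.1 z.2.2 * P z.2.1 z.1
    rw [hrev z.1 z.2.1]; ring
  -- (6) ent (X1,Y1,Y2) = ent μ + h2 + EW  (conditional independence given X1)
  have f6 : ent (jointX1Y1Y2 μ P W) = ent μ + h2 + EW := by
    have hK1 : ∀ x : X, ∑ q : Y × Y, W x q.1 * PW x q.2 = 1 := by
      intro x
      rw [Fintype.sum_prod_type]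
      calc ∑ y1, ∑ y2, W x y1 * PW x y2 = ∑ y1, W x y1 * ∑ y2, PW x y2 :=
            Finset.sum_congr rfl fun y1 _ => (Finset.mul_sum _ _ _).symm
        _ = ∑ y1, W x y1 := by
            refine Finset.sum_congr rfl fun y1 _ => ?_
            rw [hPW1 x, mul_one]
        _ = 1 := hW1 x
    have hfun : jointX1Y1Y2 μ P W
        = fun p : X × Y × Y => μ p.1 * (W p.1 p.2.1 * PW p.1 p.2.2) := by
      funext p
      show ∑ x', μ p.1 * W p.1 p.2.1 * P p.1 x' * W x' p.2.2
          = μ p.1 * (W p.1 p.2.1 * ∑ x', P p.1 x' * W x' p.2.2)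
      rw [Finset.mul_sum, Finset.mul_sum]
      exact Finset.sum_congr rfl fun x' _ => by ring
    have hker := ent_prod_kernel μ (fun x (q : Y × Y) => W x q.1 * PW x q.2) hK1
    have hKent : ∀ x : X, ent (fun q : Y × Y => W x q.1 * PW x q.2)
        = ent (W x) + ent (PW x) := by
      intro x
      have := ent_prod_kernel (W x) (fun _ : Y => PW x) (fun _ => hPW1 x)
      rw [this, ← Finset.sum_mul, hW1 x, one_mul]
    rw [hfun]
    rw [hker]
    rw [Finset.sum_congr rfl fun x _ => congrArg (μ x * ·) (hKent x)]
    have : ∑ x, μ x * (ent (W x) + ent (PW x)) = h2 + EW := by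
      rw [hh2, hEW, ← Finset.sum_add_distrib]
      exact Finset.sum_congr rfl fun x _ => by ring
    rw [this]; ring
  -- (8) ent (X1,X2,Y2) = ent (X1,X2) + h2
  have f8 : ent (jointX1X2Y2 μ P W) = ent (jointXX μ P) + h2 := by
    have h1 : ent (fun q : (X × X) × Y => jointX1X2Y2 μ P W (eqA3 X Y q))
        = ent (jointX1X2Y2 μ P W) := ent_comp_equiv (eqA3 X Y) _
    rw [← h1]
    have h2' : ent (fun q : (X × X) × Y => jointX1X2Y2 μ P W (eqA3 X Y q))
        = ent (fun q : (X × X) × Y => jointXX μ P q.1 * W q.1.2 q.2) :=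
      ent_congr fun q => rfl
    rw [h2', ent_prod_kernel (jointXX μ P) (fun t : X × X => W t.2) (fun t => hW1 t.2)]
    congr 1
    rw [hh2, Fintype.sum_prod_type]
    rw [Finset.sum_comm]
    refine Finset.sum_congr rfl fun x2 _ => ?_
    show ∑ x1, μ x1 * P x1 x2 * ent (W x2) = μ x2 * ent (W x2)
    rw [← Finset.sum_mul, hinv x2]
  -- (7) the conditional mutual information inequality via cmi_nonneg
  have f7 : (ent (jointX1X2Y1 μ P W) + h2) + ent (jointYY μ P W)
      ≤ ent (jointX1Y1Y2 μ P W) + (ent (jointX2Y1 μ P W) + h2) := by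
    set p : X × X × (Y × Y) → ℝ :=
      fun z => μ z.1 * W z.1 z.2.2.1 * P z.1 z.2.1 * W z.2.1 z.2.2.2 with hpdef
    set pBC : X × (Y × Y) → ℝ :=
      fun q => jointX2Y1 μ P W (q.1, q.2.1) * W q.1 q.2.2 with hpBCdef
    have hp : ∀ z, 0 ≤ p z := fun z =>
      mul_nonneg (mul_nonneg (mul_nonneg (hμ0 _) (hW0 _ _)) (hP0 _ _)) (hW0 _ _)
    have hs : ∑ z, p z = 1 := by
      rw [sum_triple]
      have hin : ∀ x1 x2 : X, ∑ c : Y × Y, p (x1, x2, c) = μ x1 * P x1 x2 := by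
        intro x1 x2
        rw [Fintype.sum_prod_type]
        calc ∑ y1, ∑ y2, μ x1 * W x1 y1 * P x1 x2 * W x2 y2
            = ∑ y1, μ x1 * W x1 y1 * P x1 x2 * ∑ y2, W x2 y2 :=
              Finset.sum_congr rfl fun y1 _ => (Finset.mul_sum _ _ _).symm
          _ = ∑ y1, μ x1 * P x1 x2 * W x1 y1 := by
              refine Finset.sum_congr rfl fun y1 _ => ?_
              rw [hW1 x2]; ring
          _ = μ x1 * P x1 x2 * ∑ y1, W x1 y1 := (Finset.mul_sum _ _ _).symm
          _ = μ x1 * P x1 x2 := by rw [hW1 x1, mul_one]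
      calc ∑ x1, ∑ x2, ∑ c : Y × Y, p (x1, x2, c)
          = ∑ x1, ∑ x2, μ x1 * P x1 x2 :=
            Finset.sum_congr rfl fun x1 _ => Finset.sum_congr rfl fun x2 _ => hin x1 x2
        _ = ∑ x1, μ x1 * ∑ x2, P x1 x2 :=
            Finset.sum_congr rfl fun x1 _ => (Finset.mul_sum _ _ _).symm
        _ = ∑ x1, μ x1 := by
            refine Finset.sum_congr rfl fun x1 _ => ?_
            rw [hP1 x1, mul_one]
        _ = 1 := hμ1
    have hAC : ∀ (a : X) (c : Y × Y), jointX1Y1Y2 μ P W (a, c) = ∑ b, p (a, b, c) :=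
      fun a c => rfl
    have hBC : ∀ (b : X) (c : Y × Y), pBC (b, c) = ∑ a, p (a, b, c) := by
      intro b c
      show jointX2Y1 μ P W (b, c.1) * W b c.2
          = ∑ a, μ a * W a c.1 * P a b * W b c.2
      show (∑ x, μ x * W x c.1 * P x b) * W b c.2
          = ∑ a, μ a * W a c.1 * P a b * W b c.2
      rw [Finset.sum_mul]
    have hC : ∀ c : Y × Y, jointYY μ P W c = ∑ a, ∑ b, p (a, b, c) := fun c => rfl
    have hcmi := cmi_nonneg p (jointX1Y1Y2 μ P W) pBC (jointYY μ P W) hp hs hAC hBC hC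
    -- identify ent p and ent pBC
    have hentp : ent p = ent (jointX1X2Y1 μ P W) + h2 := by
      have h1 : ent (fun q : (X × X × Y) × Y => p (eqA4 X Y q)) = ent p :=
        ent_comp_equiv (eqA4 X Y) p
      rw [← h1]
      have h2' : ent (fun q : (X × X × Y) × Y => p (eqA4 X Y q))
          = ent (fun q : (X × X × Y) × Y => jointX1X2Y1 μ P W q.1 * W q.1.2.1 q.2) :=
        ent_congr fun q => rfl
      rw [h2', ent_prod_kernel (jointX1X2Y1 μ P W) (fun t : X × X × Y => W t.2.1)
        (fun t => hW1 t.2.1)]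
      congr 1
      rw [hh2, sum_triple]
      rw [Finset.sum_comm]
      refine Finset.sum_congr rfl fun x2 _ => ?_
      calc ∑ x1, ∑ y1, jointX1X2Y1 μ P W (x1, x2, y1) * ent (W x2)
          = ∑ x1, ∑ y1, (μ x1 * P x1 x2 * ent (W x2)) * W x1 y1 := by
            refine Finset.sum_congr rfl fun x1 _ => Finset.sum_congr rfl fun y1 _ => ?_
            show μ x1 * W x1 y1 * P x1 x2 * ent (W x2)
                = (μ x1 * P x1 x2 * ent (W x2)) * W x1 y1
            ring
        _ = ∑ x1, μ x1 * P x1 x2 * ent (W x2) := by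
            refine Finset.sum_congr rfl fun x1 _ => ?_
            rw [← Finset.mul_sum, hW1 x1, mul_one]
        _ = μ x2 * ent (W x2) := by rw [← Finset.sum_mul, hinv x2]
    have hentpBC : ent pBC = ent (jointX2Y1 μ P W) + h2 := by
      have h1 : ent (fun q : (X × Y) × Y => pBC (eqXY X Y q)) = ent pBC :=
        ent_comp_equiv (eqXY X Y) pBC
      rw [← h1]
      have h2' : ent (fun q : (X × Y) × Y => pBC (eqXY X Y q))
          = ent (fun q : (X × Y) × Y => jointX2Y1 μ P W q.1 * W q.1.1 q.2) :=
        ent_congr fun q => rfl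
      rw [h2', ent_prod_kernel (jointX2Y1 μ P W) (fun t : X × Y => W t.1)
        (fun t => hW1 t.1)]
      congr 1
      rw [hh2, Fintype.sum_prod_type]
      refine Finset.sum_congr rfl fun x2 _ => ?_
      calc ∑ y1, jointX2Y1 μ P W (x2, y1) * ent (W x2)
          = ∑ y1, ∑ x, (μ x * P x x2 * ent (W x2)) * W x y1 := by
            refine Finset.sum_congr rfl fun y1 _ => ?_
            show (∑ x, μ x * W x y1 * P x x2) * ent (W x2)
                = ∑ x, (μ x * P x x2 * ent (W x2)) * W x y1
            rw [Finset.sum_mul]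
            exact Finset.sum_congr rfl fun x _ => by ring
        _ = ∑ x, ∑ y1, (μ x * P x x2 * ent (W x2)) * W x y1 := Finset.sum_comm
        _ = ∑ x, μ x * P x x2 * ent (W x2) := by
            refine Finset.sum_congr rfl fun x _ => ?_
            rw [← Finset.mul_sum, hW1 x, mul_one]
        _ = μ x2 * ent (W x2) := by rw [← Finset.sum_mul, hinv x2]
    rw [hentp, hentpBC] at hcmi
    exact hcmi
  -- assemble
  refine ⟨?_, ?_, ?_⟩
  · unfold IX1X2gY2 IX2X1gY1
    linarith [f1, f2, f3, f4, f5]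
  · unfold CL HY2gY1 HY2gX1 IX1X2gY2
    linarith [f1, f2, f3, f4, f5, f6, f7, f8]
  · unfold CL HY2gY1 HY2gX1 CP IX1X2 IY1Y2
    linarith [f1, f2, f3, f4, f5, f6, f7, f8]
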